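/- Let $f : \mathbb{R}^n \to \mathbb{R}^{n \times d}$ be differentiable and set $g^i_{rj}(y) = \sum_h f^h_r(y)\,\partial_h f^i_j(y)$. For indices $k \le l \le m$, points $y_k, y_l, y_m \in \mathbb{R}^n$, $x_k, x_l, x_m \in \mathbb{R}^d$, and reals $A^{rj}_{kl}, A^{rj}_{lm}, A^{rj}_{km}$ satisfying Chen's relation $A^{rj}_{km} = A^{rj}_{kl} + A^{rj}_{lm} + (x^r_l - x^r_k)(x^j_m - x^j_l)$, define $J^i_{kl} = y^i_l - y^i_k - f^i_j(y_k)(x^j_l - x^j_k) - g^i_{rj}(y_k) A^{rj}_{kl}$ (and analogously for $J_{km}, J_{lm}$), $I^i_{kl} = y^i_l - y^i_k - f^i_j(y_k)(x^j_l - x^j_k)$, and $R^i_{kl,j} = f^i_j(y_l) - f^i_j(y_k) - \partial_h f^i_j(y_k)(y^h_l - y^h_k)$ (summation over repeated indices). Then $J^i_{km} - J^i_{kl} - J^i_{lm} = (R^i_{kl,j} + \partial_h f^i_j(y_k) I^h_{kl})(x^j_m - x^j_l) + (g^i_{rj}(y_l) - g^i_{rj}(y_k)) A^{rj}_{lm}$.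 -/

import Mathlib

/-- The second-order cocycle identity (equation (12) of the paper) for the error
functional `J` of the Milstein-type scheme, using Chen's relation for the
second-level components `A`.  Here `∂ₕ f i j (y) = fderiv ℝ (f i j) y (e_h)`. -/
theorem milstein_error_cocycle_identity {n d : ℕ}
    (f : Fin n → Fin d → (Fin n → ℝ) → ℝ)
    (hf : ∀ i j, Differentiable ℝ (f i j))
    (yk yl ym : Fin n → ℝ) (xk xl xm : Fin d → ℝ)
    (Akl Alm Akm : Fin d → Fin d → ℝ)
    (hChen : ∀ r j, Akm r j = Akl r j + Alm r j + (xl r - xk r) * (xm j - xl j))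
    (g : Fin n → Fin d → Fin d → (Fin n → ℝ) → ℝ)
    (hg : ∀ i r j y, g i r j y = ∑ h, f h r y * fderiv ℝ (f i j) y (Pi.single h 1))
    (Jkl Jlm Jkm : Fin n → ℝ)
    (hJkl : ∀ i, Jkl i = yl i - yk i - ∑ j, f i j yk * (xl j - xk j)
      - ∑ r, ∑ j, g i r j yk * Akl r j)
    (hJlm : ∀ i, Jlm i = ym i - yl i - ∑ j, f i j yl * (xm j - xl j)
      - ∑ r, ∑ j, g i r j yl * Alm r j)
    (hJkm : ∀ i, Jkm i = ym i - yk i - ∑ j, f i j yk * (xm j - xk j)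
      - ∑ r, ∑ j, g i r j yk * Akm r j)
    (I : Fin n → ℝ)
    (hI : ∀ h, I h = yl h - yk h - ∑ j, f h j yk * (xl j - xk j))
    (R : Fin n → Fin d → ℝ)
    (hR : ∀ i j, R i j = f i j yl - f i j yk
      - ∑ h, fderiv ℝ (f i j) yk (Pi.single h 1) * (yl h - yk h)) :
    ∀ i, Jkm i - Jkl i - Jlm i
      = ∑ j, (R i j + ∑ h, fderiv ℝ (f i j) yk (Pi.single h 1) * I h) * (xm j - xl j)
        + ∑ r, ∑ j, (g i r j yl - g i r j yk) * Alm r j := by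
  intro i
  have key : ∀ a b : Fin d → ℝ,
      ∑ r : Fin d, ∑ j : Fin d, ∑ h : Fin n,
        f h r yk * fderiv ℝ (f i j) yk (Pi.single h 1) * a r * b j
      = ∑ j : Fin d, ∑ h : Fin n, ∑ r : Fin d,
        fderiv ℝ (f i j) yk (Pi.single h 1) * f h r yk * a r * b j := by
    intro a b
    rw [Finset.sum_comm]
    refine Finset.sum_congr rfl fun j _ => ?_
    rw [Finset.sum_comm]
    exact Finset.sum_congr rfl fun h _ => Finset.sum_congr rfl fun r _ => by ring
  simp only [hJkm, hJkl, hJlm, hChen, hI, hR, hg]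
  simp only [mul_add, add_mul, sub_mul, mul_sub, Finset.sum_add_distrib,
    Finset.sum_sub_distrib, Finset.mul_sum, Finset.sum_mul]
  ring_nf
  rw [key xl xm, key xk xm, key xl xl, key xk xl]
  ring
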